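/- Let P be an m-homogeneous polynomial (m ≥ 2) on a normed space with ‖P‖ > 0. Then A_{P∘P...} stabilizes for iterates: A_{P^k} = A_P for every k ≥ 1, and consequently J_{P^k} = J_P. -/

import Mathlib

open Filter

/-- Once an orbit enters the invariant ball, the norms of subsequent iterates never
increase. -/
lemma iterate_norm_le {X : Type*} [NormedAddCommGroup X]
    (P : X → X) (m : ℕ) (hm : 2 ≤ m) (C : ℝ) (hC : 0 < C)
    (hbound : ∀ x : X, ‖P x‖ ≤ C * ‖x‖ ^ m)
    (y : X) (hy : ‖y‖ ≤ min 1 C⁻¹) : ∀ j, ‖P^[j] y‖ ≤ ‖y‖ := by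
  intro j
  induction j with
  | zero => simp
  | succ j ih =>
    rw [Function.iterate_succ_apply']
    set z := P^[j] y with hz
    have hz1 : ‖z‖ ≤ 1 := ih.trans (hy.trans (min_le_left _ _))
    have hzC : ‖z‖ ≤ C⁻¹ := ih.trans (hy.trans (min_le_right _ _))
    calc ‖P z‖ ≤ C * ‖z‖ ^ m := hbound z
      _ = C * (‖z‖ ^ (m - 1) * ‖z‖) := by
          rw [← pow_succ, Nat.sub_add_cancel (by omega)]
      _ ≤ C * (C⁻¹ * ‖z‖) := by
          apply mul_le_mul_of_nonneg_left _ hC.le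
          apply mul_le_mul_of_nonneg_right _ (norm_nonneg _)
          calc ‖z‖ ^ (m - 1) ≤ ‖z‖ ^ 1 :=
              pow_le_pow_of_le_one (norm_nonneg _) hz1 (by omega)
            _ = ‖z‖ := pow_one _
            _ ≤ C⁻¹ := hzC
      _ = ‖z‖ := by field_simp
      _ ≤ ‖y‖ := ih

/-- For every `k ≥ 1`, the basin of attraction of `0` for the iterate `P^[k]`
coincides with the one for `P`, and consequently the Julia sets coincide:
`A_{P^k} = A_P` and `J_{P^k} = J_P`. -/
theorem basin_and_julia_of_iterate {X : Type*} [NormedAddCommGroup X] [NormedSpace ℂ X]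
    (P : X → X) (m : ℕ) (hm : 2 ≤ m)
    (hhom : ∀ (c : ℂ) (x : X), P (c • x) = c ^ m • P x)
    (C : ℝ) (hC : 0 < C)
    (hbound : ∀ x : X, ‖P x‖ ≤ C * ‖x‖ ^ m)
    (hsup : ∀ ε > (0 : ℝ), ∃ x : X, ‖x‖ ≤ 1 ∧ C - ε < ‖P x‖)
    (k : ℕ) (hk : 1 ≤ k) :
    {x : X | Tendsto (fun n => (P^[k])^[n] x) atTop (nhds 0)} =
        {x : X | Tendsto (fun n => P^[n] x) atTop (nhds 0)} ∧
      frontier {x : X | Tendsto (fun n => (P^[k])^[n] x) atTop (nhds 0)} =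
        frontier {x : X | Tendsto (fun n => P^[n] x) atTop (nhds 0)} := by
  have hiter : ∀ n x, (P^[k])^[n] x = P^[k * n] x := by
    intro n x
    rw [Function.iterate_mul]
  have h : {x : X | Tendsto (fun n => (P^[k])^[n] x) atTop (nhds 0)} =
      {x : X | Tendsto (fun n => P^[n] x) atTop (nhds 0)} := by
    ext x
    simp only [Set.mem_setOf_eq]
    constructor
    · intro hx
      have hx' : Tendsto (fun n => P^[k * n] x) atTop (nhds 0) := by
        simpa only [hiter] using hx
      rw [NormedAddCommGroup.tendsto_nhds_zero] at hx' ⊢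
      intro ε hε
      set r := min (min 1 C⁻¹) ε with hr
      have hrpos : 0 < r := lt_min (lt_min one_pos (inv_pos.mpr hC)) hε
      obtain ⟨N, hN⟩ := (hx' r hrpos).exists_forall_of_atTop
      have hNlt : ‖P^[k * N] x‖ < r := hN N le_rfl
      filter_upwards [eventually_ge_atTop (k * N)] with n hn
      have : P^[n] x = P^[n - k * N] (P^[k * N] x) := by
        rw [← Function.iterate_add_apply, Nat.sub_add_cancel hn]
      rw [this]
      calc ‖P^[n - k * N] (P^[k * N] x)‖ ≤ ‖P^[k * N] x‖ :=
          iterate_norm_le P m hm C hC hbound _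
            (le_trans hNlt.le (min_le_left _ _)) _
        _ < r := hNlt
        _ ≤ ε := min_le_right _ _
    · intro hx
      have hmono : Tendsto (fun n => k * n) atTop atTop :=
        tendsto_atTop_mono (fun n => Nat.le_mul_of_pos_left n hk) tendsto_id
      have := hx.comp hmono
      simpa only [hiter, Function.comp_def] using this
  exact ⟨h, by rw [h]⟩
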